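/- Let V₁, …, V_M : ℝ → ℝ be measurable with Σ_{m=1}^{M} Vₘ(θ)² = 1 for every θ ∈ ℝ. Define multipliers on ℝ²: m₀(ω) = Φ(|ω|) and m_{n,m}(ω) = Wₙ(|ω|)·Vₘ(arg ω) for ω ≠ 0 (where arg ω is the polar angle of ω), with m_{n,m}(0) = 0. Then for every f ∈ L²(ℝ²), ‖𝓕⁻¹( m₀ · 𝓕(f) )‖_{L²}² + Σ_{n=1}^{N−1} Σ_{m=1}^{M} ‖𝓕⁻¹( m_{n,m} · 𝓕(f) )‖_{L²}² = ‖f‖_{L²}²; i.e., the type I empirical curvelet family is a tight frame of L²(ℝ²). -/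

import Mathlib

set_option maxHeartbeats 1000000

open FourierTransform MeasureTheory Classical

/-- The type I empirical curvelet family is a tight frame of `L²(ℝ²)`: with
`m₀(ω) = Φ(|ω|)`, `m_{n,m}(ω) = Wₙ(|ω|)·Vₘ(arg ω)` for `ω ≠ 0` and
`m_{n,m}(0) = 0`, one has
`‖𝓕⁻¹(m₀·𝓕 f)‖² + Σₙ Σₘ ‖𝓕⁻¹(m_{n,m}·𝓕 f)‖² = ‖f‖²` for every `f ∈ L²(ℝ²)`. -/
theorem empirical_curvelet_I_tight_frame
    (β : ℝ → ℝ)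
    (hβ0 : ∀ x : ℝ, x ≤ 0 → β x = 0)
    (hβ1 : ∀ x ∈ Set.Icc (0 : ℝ) 1, β x = x ^ 4 * (35 - 84 * x + 70 * x ^ 2 - 20 * x ^ 3))
    (hβ2 : ∀ x : ℝ, 1 ≤ x → β x = 1)
    (N : ℕ) (hN : 2 ≤ N) (ω : ℕ → ℝ)
    (hω0 : 0 < ω 1)
    (hωmono : ∀ n, 1 ≤ n → n ≤ N - 2 → ω n < ω (n + 1))
    (γ : ℝ) (hγ : γ ∈ Set.Ioo (0 : ℝ) 1)
    (hsep : ∀ n, 1 ≤ n → n ≤ N - 2 → (1 + γ) * ω n ≤ (1 - γ) * ω (n + 1))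
    (Φ : ℝ → ℝ) (W : ℕ → ℝ → ℝ)
    (hΦ1 : ∀ r : ℝ, 0 ≤ r → r ≤ (1 - γ) * ω 1 → Φ r = 1)
    (hΦ2 : ∀ r : ℝ, (1 - γ) * ω 1 ≤ r → r ≤ (1 + γ) * ω 1 →
      Φ r = Real.cos (Real.pi / 2 * β ((r - (1 - γ) * ω 1) / (2 * γ * ω 1))))
    (hΦ3 : ∀ r : ℝ, (1 + γ) * ω 1 < r → Φ r = 0)
    (hW1 : ∀ n, 1 ≤ n → n ≤ N - 2 → ∀ r : ℝ, (1 - γ) * ω n ≤ r → r ≤ (1 + γ) * ω n →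
      W n r = Real.sin (Real.pi / 2 * β ((r - (1 - γ) * ω n) / (2 * γ * ω n))))
    (hW2 : ∀ n, 1 ≤ n → n ≤ N - 2 → ∀ r : ℝ, (1 + γ) * ω n ≤ r → r ≤ (1 - γ) * ω (n + 1) →
      W n r = 1)
    (hW3 : ∀ n, 1 ≤ n → n ≤ N - 2 → ∀ r : ℝ,
      (1 - γ) * ω (n + 1) ≤ r → r ≤ (1 + γ) * ω (n + 1) →
      W n r = Real.cos (Real.pi / 2 * β ((r - (1 - γ) * ω (n + 1)) / (2 * γ * ω (n + 1)))))
    (hW4 : ∀ n, 1 ≤ n → n ≤ N - 2 → ∀ r : ℝ, 0 ≤ r →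
      (r < (1 - γ) * ω n ∨ (1 + γ) * ω (n + 1) < r) → W n r = 0)
    (hWl1 : ∀ r : ℝ, (1 - γ) * ω (N - 1) ≤ r → r ≤ (1 + γ) * ω (N - 1) →
      W (N - 1) r = Real.sin (Real.pi / 2 * β ((r - (1 - γ) * ω (N - 1)) / (2 * γ * ω (N - 1)))))
    (hWl2 : ∀ r : ℝ, (1 + γ) * ω (N - 1) ≤ r → W (N - 1) r = 1)
    (hWl3 : ∀ r : ℝ, 0 ≤ r → r < (1 - γ) * ω (N - 1) → W (N - 1) r = 0)
    (M : ℕ) (hM : 1 ≤ M) (V : ℕ → ℝ → ℝ)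
    (hVmeas : ∀ m, 1 ≤ m → m ≤ M → Measurable (V m))
    (hV : ∀ θ : ℝ, ∑ m ∈ Finset.Icc 1 M, (V m θ) ^ 2 = 1)
    (F : Lp ℂ 2 (volume : Measure (EuclideanSpace ℝ (Fin 2))) ≃ₗᵢ[ℂ]
      Lp ℂ 2 (volume : Measure (EuclideanSpace ℝ (Fin 2))))
    (hF : ∀ (f : EuclideanSpace ℝ (Fin 2) → ℂ) (hf1 : Integrable f)
      (hf2 : MemLp f 2 (volume : Measure (EuclideanSpace ℝ (Fin 2)))),
      (F (hf2.toLp f) : EuclideanSpace ℝ (Fin 2) → ℂ) =ᵐ[volume] 𝓕 f) :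
    ∀ (f : Lp ℂ 2 (volume : Measure (EuclideanSpace ℝ (Fin 2))))
      (g₀ : Lp ℂ 2 (volume : Measure (EuclideanSpace ℝ (Fin 2))))
      (g : ℕ → ℕ → Lp ℂ 2 (volume : Measure (EuclideanSpace ℝ (Fin 2)))),
      ((g₀ : EuclideanSpace ℝ (Fin 2) → ℂ) =ᵐ[volume]
        fun x => (Φ ‖x‖ : ℂ) * (F f : EuclideanSpace ℝ (Fin 2) → ℂ) x) →
      (∀ n, 1 ≤ n → n ≤ N - 1 → ∀ m, 1 ≤ m → m ≤ M →
        (g n m : EuclideanSpace ℝ (Fin 2) → ℂ) =ᵐ[volume]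
          fun x => (if x = 0 then (0 : ℂ)
              else (W n ‖x‖ * V m (Complex.arg (x 0 + x 1 * Complex.I)) : ℂ)) *
            (F f : EuclideanSpace ℝ (Fin 2) → ℂ) x) →
      ‖F.symm g₀‖ ^ 2 + ∑ n ∈ Finset.Icc 1 (N - 1), ∑ m ∈ Finset.Icc 1 M,
        ‖F.symm (g n m)‖ ^ 2 = ‖f‖ ^ 2 := by
    -- basic facts
  obtain ⟨hγ0, hγ1⟩ := hγ
  have hb0 : β 0 = 0 := hβ0 0 le_rfl
  have hb1 : β 1 = 1 := hβ2 1 le_rfl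
  have hω1le : ∀ n, 1 ≤ n → n ≤ N - 1 → ω 1 ≤ ω n := by
    intro n h1
    induction n with
    | zero => omega
    | succ k ih =>
      intro h2
      rcases Nat.eq_or_lt_of_le h1 with he | hlt
      · rw [← he]
      · have hk1 : 1 ≤ k := by omega
        have hk2 : k ≤ N - 2 := by omega
        exact le_of_lt (lt_of_le_of_lt (ih hk1 (by omega)) (hωmono k hk1 hk2))
  have hωpos : ∀ n, 1 ≤ n → n ≤ N - 1 → 0 < ω n := fun n h1 h2 =>
    lt_of_lt_of_le hω0 (hω1le n h1 h2)
  have hab : ∀ n : ℕ, 0 < ω n → (1 - γ) * ω n < (1 + γ) * ω n := by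
    intro n h; nlinarith
  have harg1 : ∀ n : ℕ, 0 < ω n →
      ((1 + γ) * ω n - (1 - γ) * ω n) / (2 * γ * ω n) = 1 := by
    intro n h
    rw [div_eq_one_iff_eq (by positivity)]
    ring
  -- the main induction: partial sums form a low-pass window
  have main : ∀ n, 1 ≤ n → n ≤ N - 1 →
      (∀ r : ℝ, 0 ≤ r → r ≤ (1 - γ) * ω n →
        Φ r ^ 2 + ∑ k ∈ Finset.Icc 1 (n - 1), W k r ^ 2 = 1) ∧
      (∀ r : ℝ, (1 - γ) * ω n ≤ r → r ≤ (1 + γ) * ω n →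
        Φ r ^ 2 + ∑ k ∈ Finset.Icc 1 (n - 1), W k r ^ 2
          = Real.cos (Real.pi / 2 * β ((r - (1 - γ) * ω n) / (2 * γ * ω n))) ^ 2) ∧
      (∀ r : ℝ, (1 + γ) * ω n ≤ r →
        Φ r ^ 2 + ∑ k ∈ Finset.Icc 1 (n - 1), W k r ^ 2 = 0) := by
    intro n h1
    induction n, h1 using Nat.le_induction with
    | base =>
      intro _
      have hIcc : Finset.Icc 1 (1 - 1) = (∅ : Finset ℕ) := Finset.Icc_eq_empty (by omega)
      refine ⟨?_, ?_, ?_⟩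
      · intro r hr0 hr1
        rw [hIcc, Finset.sum_empty, add_zero, hΦ1 r hr0 hr1, one_pow]
      · intro r hr0 hr1
        rw [hIcc, Finset.sum_empty, add_zero, hΦ2 r hr0 hr1]
      · intro r hr
        rw [hIcc, Finset.sum_empty, add_zero]
        rcases eq_or_lt_of_le hr with he | hlt
        · have ha : (1 - γ) * ω 1 ≤ r := le_of_lt (lt_of_lt_of_le (hab 1 hω0) (le_of_eq he))
          rw [hΦ2 r ha (le_of_eq he.symm), ← he, harg1 1 hω0, hb1, mul_one,
            Real.cos_pi_div_two]
          norm_num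
        · rw [hΦ3 r hlt]
          norm_num
    | succ j hj ih =>
      intro h2
      have hj2 : j ≤ N - 2 := by omega
      obtain ⟨C1, C2, C3⟩ := ih (by omega)
      have hωj : 0 < ω j := hωpos j hj (by omega)
      have hωj1 : 0 < ω (j + 1) := hωpos (j + 1) (by omega) h2
      have hsum : ∀ r : ℝ, ∑ k ∈ Finset.Icc 1 (j + 1 - 1), W k r ^ 2
          = (∑ k ∈ Finset.Icc 1 (j - 1), W k r ^ 2) + W j r ^ 2 := by
        intro r
        obtain ⟨j', rfl⟩ : ∃ j', j = j' + 1 := ⟨j - 1, by omega⟩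
        simp only [Nat.add_sub_cancel]
        exact Finset.sum_Icc_succ_top (by omega) _
      refine ⟨?_, ?_, ?_⟩
      · intro r hr0 hrle
        rw [hsum, ← add_assoc]
        rcases lt_or_ge r ((1 - γ) * ω j) with h | h
        · rw [hW4 j hj hj2 r hr0 (Or.inl h), C1 r hr0 (le_of_lt h)]
          norm_num
        · rcases le_or_gt r ((1 + γ) * ω j) with h' | h'
          · rw [hW1 j hj hj2 r h h', C2 r h h', Real.cos_sq_add_sin_sq]
          · rw [hW2 j hj hj2 r (le_of_lt h') hrle, C3 r (le_of_lt h')]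
            norm_num
      · intro r h h'
        have hbj : (1 + γ) * ω j ≤ r := le_trans (hsep j hj hj2) h
        rw [hsum, ← add_assoc, C3 r hbj, hW3 j hj hj2 r h h', zero_add]
      · intro r h
        have hba : (1 - γ) * ω (j + 1) ≤ (1 + γ) * ω (j + 1) := le_of_lt (hab _ hωj1)
        have h0r : (0 : ℝ) ≤ r := by
          have : (0 : ℝ) < (1 + γ) * ω (j + 1) := by
            have : (0 : ℝ) < 1 + γ := by linarith
            positivity
          linarith
        have hbj : (1 + γ) * ω j ≤ r := le_trans (le_trans (hsep j hj hj2) hba) h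
        rw [hsum, ← add_assoc, C3 r hbj]
        rcases eq_or_lt_of_le h with he | hlt
        · rw [hW3 j hj hj2 r (le_trans hba (le_of_eq he)) (le_of_eq he.symm), ← he,
            harg1 (j + 1) hωj1, hb1, mul_one, Real.cos_pi_div_two]
          norm_num
        · rw [hW4 j hj hj2 r h0r (Or.inr hlt)]
          norm_num
  -- the full partition of unity
  have key : ∀ r : ℝ, 0 ≤ r →
      Φ r ^ 2 + ∑ n ∈ Finset.Icc 1 (N - 1), W n r ^ 2 = 1 := by
    intro r hr
    obtain ⟨C1, C2, C3⟩ := main (N - 1) (by omega) le_rfl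
    have hsum : ∑ k ∈ Finset.Icc 1 (N - 1), W k r ^ 2
        = (∑ k ∈ Finset.Icc 1 (N - 1 - 1), W k r ^ 2) + W (N - 1) r ^ 2 := by
      obtain ⟨k', hk'⟩ : ∃ k', N - 1 = k' + 1 := ⟨N - 2, by omega⟩
      rw [hk']
      simp only [Nat.add_sub_cancel]
      exact Finset.sum_Icc_succ_top (by omega) _
    rw [hsum, ← add_assoc]
    rcases lt_or_ge r ((1 - γ) * ω (N - 1)) with h | h
    · rw [hWl3 r hr h, C1 r hr (le_of_lt h)]
      norm_num
    · rcases le_or_gt r ((1 + γ) * ω (N - 1)) with h' | h'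
      · rw [hWl1 r h h', C2 r h h', Real.cos_sq_add_sin_sq]
      · rw [hWl2 r (le_of_lt h'), C3 r (le_of_lt h')]
        norm_num
  -- functional-analytic part
  intro f g₀ g hg₀ hg
  have hnorm : ∀ h : Lp ℂ 2 (volume : Measure (EuclideanSpace ℝ (Fin 2))), ‖h‖ ^ 2 = ∫ x, ‖(h : EuclideanSpace ℝ (Fin 2) → ℂ) x‖ ^ 2 := by
    intro h
    rw [← inner_self_eq_norm_sq (𝕜 := ℂ) h, MeasureTheory.L2.inner_def,
      ← integral_re (MeasureTheory.L2.integrable_inner h h)]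
    exact integral_congr_ae (Filter.Eventually.of_forall fun x =>
      inner_self_eq_norm_sq _)
  have hint : ∀ h : Lp ℂ 2 (volume : Measure (EuclideanSpace ℝ (Fin 2))),
      Integrable (fun x => ‖(h : EuclideanSpace ℝ (Fin 2) → ℂ) x‖ ^ 2) volume := by
    intro h
    have h2 := (MeasureTheory.L2.integrable_inner (𝕜 := ℂ) h h).re
    refine h2.congr (Filter.Eventually.of_forall fun x => ?_)
    exact inner_self_eq_norm_sq _
  have hne : ∀ᵐ x, x ≠ (0 : EuclideanSpace ℝ (Fin 2)) := by
    have h0 : volume ({0} : Set (EuclideanSpace ℝ (Fin 2))) = 0 := measure_singleton 0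
    rw [MeasureTheory.ae_iff]
    simp [h0]
  have hgall : ∀ᵐ x, ∀ n ∈ Finset.Icc 1 (N - 1), ∀ m ∈ Finset.Icc 1 M,
      (g n m : EuclideanSpace ℝ (Fin 2) → ℂ) x =
        (if x = 0 then (0 : ℂ)
          else (W n ‖x‖ * V m (Complex.arg (x 0 + x 1 * Complex.I)) : ℂ)) *
          (F f : EuclideanSpace ℝ (Fin 2) → ℂ) x := by
    rw [Filter.eventually_all_finset]
    intro n hn
    rw [Filter.eventually_all_finset]
    intro m hm
    rw [Finset.mem_Icc] at hn hm
    exact hg n hn.1 hn.2 m hm.1 hm.2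
  have haeq : ∀ᵐ x,
      ‖(g₀ : EuclideanSpace ℝ (Fin 2) → ℂ) x‖ ^ 2 +
        ∑ n ∈ Finset.Icc 1 (N - 1), ∑ m ∈ Finset.Icc 1 M,
          ‖(g n m : EuclideanSpace ℝ (Fin 2) → ℂ) x‖ ^ 2
        = ‖(F f : EuclideanSpace ℝ (Fin 2) → ℂ) x‖ ^ 2 := by
    filter_upwards [hg₀, hgall, hne] with x h0 hgm hx
    set c : ℝ := ‖(F f : EuclideanSpace ℝ (Fin 2) → ℂ) x‖ ^ 2 with hc
    set θ : ℝ := Complex.arg (x 0 + x 1 * Complex.I) with hθ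
    have h0' : ‖(g₀ : EuclideanSpace ℝ (Fin 2) → ℂ) x‖ ^ 2 = Φ ‖x‖ ^ 2 * c := by
      rw [h0]
      simp only [norm_mul, Complex.norm_real, mul_pow, Real.norm_eq_abs, sq_abs, hc]
    have h1 : ∀ n ∈ Finset.Icc 1 (N - 1), ∀ m ∈ Finset.Icc 1 M,
        ‖(g n m : EuclideanSpace ℝ (Fin 2) → ℂ) x‖ ^ 2
          = W n ‖x‖ ^ 2 * V m θ ^ 2 * c := by
      intro n hn m hm
      rw [hgm n hn m hm, if_neg hx]
      simp only [norm_mul, Complex.norm_real, mul_pow, Real.norm_eq_abs, sq_abs, hc, hθ]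
    rw [h0',
      Finset.sum_congr rfl (fun n hn => Finset.sum_congr rfl (fun m hm => h1 n hn m hm))]
    have h2 : ∀ n ∈ Finset.Icc 1 (N - 1),
        ∑ m ∈ Finset.Icc 1 M, W n ‖x‖ ^ 2 * V m θ ^ 2 * c = W n ‖x‖ ^ 2 * c := by
      intro n _
      rw [← Finset.sum_mul, ← Finset.mul_sum, hV θ, mul_one]
    rw [Finset.sum_congr rfl h2, ← Finset.sum_mul, ← add_mul, key ‖x‖ (norm_nonneg x),
      one_mul]
  -- put everything together
  have hintsum : Integrable (fun x => ∑ n ∈ Finset.Icc 1 (N - 1), ∑ m ∈ Finset.Icc 1 M,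
      ‖(g n m : EuclideanSpace ℝ (Fin 2) → ℂ) x‖ ^ 2) volume :=
    integrable_finset_sum _ fun n _ => integrable_finset_sum _ fun m _ => hint (g n m)
  calc ‖F.symm g₀‖ ^ 2 + ∑ n ∈ Finset.Icc 1 (N - 1), ∑ m ∈ Finset.Icc 1 M,
        ‖F.symm (g n m)‖ ^ 2
      = ‖g₀‖ ^ 2 + ∑ n ∈ Finset.Icc 1 (N - 1), ∑ m ∈ Finset.Icc 1 M, ‖g n m‖ ^ 2 := by
        simp only [LinearIsometryEquiv.norm_map]
    _ = (∫ x, ‖(g₀ : EuclideanSpace ℝ (Fin 2) → ℂ) x‖ ^ 2) +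
        ∑ n ∈ Finset.Icc 1 (N - 1), ∑ m ∈ Finset.Icc 1 M,
          ∫ x, ‖(g n m : EuclideanSpace ℝ (Fin 2) → ℂ) x‖ ^ 2 := by
        rw [hnorm g₀]
        congr 1
        exact Finset.sum_congr rfl fun n _ => Finset.sum_congr rfl fun m _ => hnorm (g n m)
    _ = ∫ x, (‖(g₀ : EuclideanSpace ℝ (Fin 2) → ℂ) x‖ ^ 2 +
          ∑ n ∈ Finset.Icc 1 (N - 1), ∑ m ∈ Finset.Icc 1 M,
            ‖(g n m : EuclideanSpace ℝ (Fin 2) → ℂ) x‖ ^ 2) := by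
        rw [integral_add (hint g₀) hintsum, integral_finset_sum _
          (fun n _ => integrable_finset_sum _ fun m _ => hint (g n m))]
        congr 1
        exact Finset.sum_congr rfl fun n _ => by
          rw [integral_finset_sum _ (fun m _ => hint (g n m))]
    _ = ∫ x, ‖(F f : EuclideanSpace ℝ (Fin 2) → ℂ) x‖ ^ 2 := integral_congr_ae haeq
    _ = ‖F f‖ ^ 2 := (hnorm (F f)).symm
    _ = ‖f‖ ^ 2 := by rw [LinearIsometryEquiv.norm_map]
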